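/- Let ν : ℝ → ℝ be measurable with C₁ ≤ ν(t) ≤ C₂ for constants 0 < C₁ ≤ C₂, let (Dₙ) be a sequence in L²(Q; ℝ^{3×3}) converging weakly to D, and let (νₙ) be measurable functions with C₁ ≤ νₙ ≤ C₂ converging almost everywhere to ν∞ on the finite measure space Q. If limsupₙ ∫_Q νₙ |Dₙ|² ≤ ∫_Q ν∞ |D|², then Dₙ → D strongly in L²(Q; ℝ^{3×3}) and νₙ|Dₙ|² → ν∞|D|² strongly in L¹(Q). -/

import Mathlib

open MeasureTheory Filter
open scoped ENNReal NNReal InnerProductSpace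

section Helpers

variable {Q : Type*} [MeasurableSpace Q] {μ : Measure Q}

/-- Cauchy–Schwarz for integrals of nonneg L² functions. -/
lemma my_cs (u v : Q → ℝ) (hu0 : ∀ x, 0 ≤ u x) (hv0 : ∀ x, 0 ≤ v x)
    (hu : MemLp u 2 μ) (hv : MemLp v 2 μ) :
    ∫ x, u x * v x ∂μ ≤ Real.sqrt (∫ x, u x ^ 2 ∂μ) * Real.sqrt (∫ x, v x ^ 2 ∂μ) := by
  have hpq : Real.HolderConjugate 2 2 := Real.HolderConjugate.two_two
  have h2 : ENNReal.ofReal (2:ℝ) = 2 := by norm_num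
  have := integral_mul_le_Lp_mul_Lq_of_nonneg hpq (μ := μ)
    (Eventually.of_forall hu0) (Eventually.of_forall hv0) (h2 ▸ hu) (h2 ▸ hv)
  calc ∫ x, u x * v x ∂μ
      ≤ (∫ a, u a ^ (2:ℝ) ∂μ) ^ (1/(2:ℝ)) * (∫ a, v a ^ (2:ℝ) ∂μ) ^ (1/(2:ℝ)) := this
    _ = Real.sqrt (∫ x, u x ^ 2 ∂μ) * Real.sqrt (∫ x, v x ^ 2 ∂μ) := by
        rw [← Real.sqrt_eq_rpow, ← Real.sqrt_eq_rpow]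
        simp [Real.rpow_two]

/-- Product of two L² functions is integrable. -/
lemma my_mulint {u v : Q → ℝ} (hu : MemLp u 2 μ) (hv : MemLp v 2 μ) :
    Integrable (fun x => u x * v x) μ := by
  have h12 : (1:ENNReal)/1 = 1/2+1/2 := by rw [one_div, ENNReal.add_halves]; norm_num
  have := hv.smul (φ := u) hu (r := 1)
    (hpqr := ⟨by rw [ENNReal.inv_two_add_inv_two, inv_one]⟩)
  rw [memLp_one_iff_integrable] at this
  exact this

local notation "E3" => EuclideanSpace ℝ (Fin 3 × Fin 3)

/-- Weakly convergent sequences in L² are norm bounded (Banach–Steinhaus). -/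
lemma my_bdd (μ : Measure Q) (D : ℕ → Q → E3) (Dlim : Q → E3)
    (hD : ∀ n, MemLp (D n) 2 μ)
    (hweak : ∀ φ : Q → E3, MemLp φ 2 μ →
      Tendsto (fun n => ∫ x, (inner ℝ (D n x) (φ x) : ℝ) ∂μ) atTop
        (nhds (∫ x, (inner ℝ (Dlim x) (φ x) : ℝ) ∂μ))) :
    ∃ M : ℝ, 0 ≤ M ∧ ∀ n, ∫ x, ‖D n x‖ ^ 2 ∂μ ≤ M := by
  set g : ℕ → Lp E3 2 μ := fun n => (hD n).toLp _ with hg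
  set T : ℕ → (Lp E3 2 μ) →L[ℝ] ℝ := fun n => innerSL ℝ (g n) with hT
  have key : ∀ n (φ' : Lp E3 2 μ), T n φ' = ∫ x, (inner ℝ (D n x) (φ' x) : ℝ) ∂μ := by
    intro n φ'
    have h1 : (inner ℝ (g n) φ' : ℝ) = ∫ x, (inner ℝ (g n x) (φ' x) : ℝ) ∂μ :=
      L2.inner_def (g n) φ'
    show (inner ℝ (g n) φ' : ℝ) = _
    rw [h1]
    refine integral_congr_ae ?_
    filter_upwards [MemLp.coeFn_toLp (hD n)] with x hx
    rw [hx]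
  have hpt : ∀ φ' : Lp E3 2 μ, ∃ C, ∀ n, ‖T n φ'‖ ≤ C := by
    intro φ'
    obtain ⟨C, hC⟩ := ((hweak φ' (Lp.memLp φ')).norm).bddAbove_range
    exact ⟨C, fun n => by rw [key]; exact hC (Set.mem_range_self n)⟩
  obtain ⟨C', hC'⟩ := banach_steinhaus hpt
  refine ⟨C' ^ 2, sq_nonneg _, fun n => ?_⟩
  have h1 : ‖g n‖ ≤ C' := by
    have := hC' n
    rwa [hT, innerSL_apply_norm] at this
  have h2 : ∫ x, ‖D n x‖ ^ 2 ∂μ = ‖g n‖ ^ 2 := by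
    have hi : (inner ℝ (g n) (g n) : ℝ) = ∫ x, (inner ℝ (g n x) (g n x) : ℝ) ∂μ :=
      L2.inner_def (g n) (g n)
    rw [real_inner_self_eq_norm_sq] at hi
    rw [hi]
    refine integral_congr_ae ?_
    filter_upwards [MemLp.coeFn_toLp (hD n)] with x hx
    rw [hx, real_inner_self_eq_norm_sq]
  rw [h2]
  exact pow_le_pow_left₀ (norm_nonneg _) h1 2

end Helpers

theorem stmt16 {Q : Type*} [MeasurableSpace Q] (μ : Measure Q) [IsFiniteMeasure μ]
    (C₁ C₂ : ℝ) (hC₁ : 0 < C₁) (hC₁₂ : C₁ ≤ C₂)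
    (D : ℕ → Q → EuclideanSpace ℝ (Fin 3 × Fin 3))
    (Dlim : Q → EuclideanSpace ℝ (Fin 3 × Fin 3))
    (hD : ∀ n, MemLp (D n) 2 μ) (hDlim : MemLp Dlim 2 μ)
    (hweak : ∀ φ : Q → EuclideanSpace ℝ (Fin 3 × Fin 3), MemLp φ 2 μ →
      Tendsto (fun n => ∫ x, (inner ℝ (D n x) (φ x) : ℝ) ∂μ) atTop
        (nhds (∫ x, (inner ℝ (Dlim x) (φ x) : ℝ) ∂μ)))
    (ν : ℕ → Q → ℝ) (νlim : Q → ℝ)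
    (hνmeas : ∀ n, Measurable (ν n))
    (hνbound : ∀ n x, C₁ ≤ ν n x ∧ ν n x ≤ C₂)
    (hνae : ∀ᵐ x ∂μ, Tendsto (fun n => ν n x) atTop (nhds (νlim x)))
    (hlimsup : limsup (fun n => ∫ x, ν n x * ‖D n x‖ ^ 2 ∂μ) atTop ≤
      ∫ x, νlim x * ‖Dlim x‖ ^ 2 ∂μ) :
    Tendsto (fun n => ∫ x, ‖D n x - Dlim x‖ ^ 2 ∂μ) atTop (nhds 0) ∧
    Tendsto (fun n => ∫ x, |ν n x * ‖D n x‖ ^ 2 - νlim x * ‖Dlim x‖ ^ 2| ∂μ)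
      atTop (nhds 0) := by
  have hC₂0 : (0:ℝ) ≤ C₂ := le_trans hC₁.le hC₁₂
  obtain ⟨M, hM0, hM⟩ := my_bdd μ D Dlim hD hweak
  -- basic facts about the viscosities
  have hν0 : ∀ n x, 0 ≤ ν n x := fun n x => le_trans hC₁.le (hνbound n x).1
  have hνabs : ∀ n x, |ν n x| ≤ C₂ := fun n x => by
    rw [abs_of_nonneg (hν0 n x)]; exact (hνbound n x).2
  have hνlimbd : ∀ᵐ x ∂μ, |νlim x| ≤ C₂ := by
    filter_upwards [hνae] with x hx
    have h1 : C₁ ≤ νlim x := ge_of_tendsto hx (Eventually.of_forall fun n => (hνbound n x).1)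
    have h2 : νlim x ≤ C₂ := le_of_tendsto hx (Eventually.of_forall fun n => (hνbound n x).2)
    rw [abs_of_nonneg (le_trans hC₁.le h1)]; exact h2
  have hνlimmeas : AEMeasurable νlim μ :=
    aemeasurable_of_tendsto_metrizable_ae _ (fun n => (hνmeas n).aemeasurable) hνae
  have hνlimsm : AEStronglyMeasurable νlim μ := hνlimmeas.aestronglyMeasurable
  have habsm : ∀ n, AEStronglyMeasurable (fun x => |ν n x - νlim x|) μ := fun n =>
    (((hνmeas n).aestronglyMeasurable.sub hνlimsm).norm).congr
      (Eventually.of_forall fun x => Real.norm_eq_abs _)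
  -- integrability facts
  have intDn2 : ∀ n, Integrable (fun x => ‖D n x‖ ^ 2) μ := fun n => (hD n).norm.integrable_sq
  have intDl2 : Integrable (fun x => ‖Dlim x‖ ^ 2) μ := hDlim.norm.integrable_sq
  have inta : ∀ n, Integrable (fun x => ν n x * ‖D n x‖ ^ 2) μ := fun n =>
    (intDn2 n).bdd_mul (hνmeas n).aestronglyMeasurable
      (Eventually.of_forall fun x => by simpa [Real.norm_eq_abs] using hνabs n x)
  have intinner : ∀ n, Integrable (fun x => (inner ℝ (D n x) (Dlim x) : ℝ)) μ := fun n =>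
    (my_mulint (hD n).norm hDlim.norm).mono' ((hD n).1.inner hDlim.1)
      (Eventually.of_forall fun x => by
        simpa [Real.norm_eq_abs] using abs_real_inner_le_norm (D n x) (Dlim x))
  have intb : ∀ n, Integrable (fun x => ν n x * (inner ℝ (D n x) (Dlim x) : ℝ)) μ := fun n =>
    (intinner n).bdd_mul (hνmeas n).aestronglyMeasurable
      (Eventually.of_forall fun x => by simpa [Real.norm_eq_abs] using hνabs n x)
  have intp : ∀ n, Integrable (fun x => νlim x * (inner ℝ (D n x) (Dlim x) : ℝ)) μ := fun n =>
    (intinner n).bdd_mul hνlimsm (by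
      filter_upwards [hνlimbd] with x hx; simpa [Real.norm_eq_abs] using hx)
  have intc : ∀ n, Integrable (fun x => ν n x * ‖Dlim x‖ ^ 2) μ := fun n =>
    intDl2.bdd_mul (hνmeas n).aestronglyMeasurable
      (Eventually.of_forall fun x => by simpa [Real.norm_eq_abs] using hνabs n x)
  have intL : Integrable (fun x => νlim x * ‖Dlim x‖ ^ 2) μ :=
    intDl2.bdd_mul hνlimsm (by
      filter_upwards [hνlimbd] with x hx; simpa [Real.norm_eq_abs] using hx)
  have intdiff2 : ∀ n, Integrable (fun x => ‖D n x - Dlim x‖ ^ 2) μ := fun n =>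
    ((hD n).sub hDlim).norm.integrable_sq
  have intνdiff2 : ∀ n, Integrable (fun x => ν n x * ‖D n x - Dlim x‖ ^ 2) μ := fun n =>
    (intdiff2 n).bdd_mul (hνmeas n).aestronglyMeasurable
      (Eventually.of_forall fun x => by simpa [Real.norm_eq_abs] using hνabs n x)
  have intabs : ∀ n, Integrable (fun x => |ν n x - νlim x| * ‖Dlim x‖ ^ 2) μ := fun n =>
    intDl2.bdd_mul (habsm n)
      (by filter_upwards [hνlimbd] with x hx
          rw [Real.norm_eq_abs, abs_abs]
          calc |ν n x - νlim x| ≤ |ν n x| + |νlim x| := abs_sub _ _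
            _ ≤ C₂ + C₂ := add_le_add (hνabs n x) hx
            _ = 2 * C₂ := by ring)
  set L : ℝ := ∫ x, νlim x * ‖Dlim x‖ ^ 2 ∂μ with hLdef
  -- Step hc : ∫ νₙ ‖Dlim‖² → L
  have hc : Tendsto (fun n => ∫ x, ν n x * ‖Dlim x‖ ^ 2 ∂μ) atTop (nhds L) := by
    refine tendsto_integral_of_dominated_convergence (fun x => C₂ * ‖Dlim x‖ ^ 2)
      (fun n => (intc n).1) (intDl2.const_mul C₂) (fun n => Eventually.of_forall fun x => ?_) ?_
    · rw [Real.norm_eq_abs, abs_mul, abs_of_nonneg (sq_nonneg (‖Dlim x‖))]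
      exact mul_le_mul_of_nonneg_right (hνabs n x) (sq_nonneg _)
    · filter_upwards [hνae] with x hx
      exact hx.mul_const _
  -- Step hd : ∫ |νₙ - ν∞| ‖Dlim‖² → 0
  have hd : Tendsto (fun n => ∫ x, |ν n x - νlim x| * ‖Dlim x‖ ^ 2 ∂μ) atTop (nhds 0) := by
    have h0 : Tendsto (fun n => ∫ x, |ν n x - νlim x| * ‖Dlim x‖ ^ 2 ∂μ) atTop
        (nhds (∫ _x, (0:ℝ) ∂μ)) := by
      refine tendsto_integral_of_dominated_convergence (fun x => (2 * C₂) * ‖Dlim x‖ ^ 2)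
        (fun n => (intabs n).1) (intDl2.const_mul _) (fun n => ?_) ?_
      · filter_upwards [hνlimbd] with x hx
        rw [Real.norm_eq_abs, abs_mul, abs_abs, abs_of_nonneg (sq_nonneg (‖Dlim x‖))]
        refine mul_le_mul_of_nonneg_right ?_ (sq_nonneg _)
        calc |ν n x - νlim x| ≤ |ν n x| + |νlim x| := abs_sub _ _
          _ ≤ C₂ + C₂ := add_le_add (hνabs n x) hx
          _ = 2 * C₂ := by ring
      · filter_upwards [hνae] with x hx
        have := ((hx.sub (tendsto_const_nhds (x := νlim x))).abs).mul_const (‖Dlim x‖ ^ 2)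
        simpa using this
    simpa using h0
  -- Step hs : ∫ (νₙ - ν∞)² ‖Dlim‖² → 0
  have hs : Tendsto (fun n => ∫ x, (ν n x - νlim x) ^ 2 * ‖Dlim x‖ ^ 2 ∂μ) atTop (nhds 0) := by
    have ints : ∀ n, Integrable (fun x => (ν n x - νlim x) ^ 2 * ‖Dlim x‖ ^ 2) μ := fun n =>
      intDl2.bdd_mul (((hνmeas n).aemeasurable.sub hνlimmeas).pow_const 2).aestronglyMeasurable
        (by filter_upwards [hνlimbd] with x hx
            rw [Real.norm_eq_abs, abs_of_nonneg (sq_nonneg (ν n x - νlim x)), ← sq_abs]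
            have h1 : |ν n x - νlim x| ≤ 2 * C₂ := by
              calc |ν n x - νlim x| ≤ |ν n x| + |νlim x| := abs_sub _ _
                _ ≤ C₂ + C₂ := add_le_add (hνabs n x) hx
                _ = 2 * C₂ := by ring
            exact pow_le_pow_left₀ (abs_nonneg _) h1 2)
    have h0 : Tendsto (fun n => ∫ x, (ν n x - νlim x) ^ 2 * ‖Dlim x‖ ^ 2 ∂μ) atTop
        (nhds (∫ _x, (0:ℝ) ∂μ)) := by
      refine tendsto_integral_of_dominated_convergence (fun x => (2 * C₂) ^ 2 * ‖Dlim x‖ ^ 2)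
        (fun n => (ints n).1) (intDl2.const_mul _) (fun n => ?_) ?_
      · filter_upwards [hνlimbd] with x hx
        rw [Real.norm_eq_abs, abs_mul, abs_of_nonneg (sq_nonneg (ν n x - νlim x)),
          abs_of_nonneg (sq_nonneg (‖Dlim x‖))]
        refine mul_le_mul_of_nonneg_right ?_ (sq_nonneg _)
        rw [← sq_abs]
        refine pow_le_pow_left₀ (abs_nonneg _) ?_ 2
        calc |ν n x - νlim x| ≤ |ν n x| + |νlim x| := abs_sub _ _
          _ ≤ C₂ + C₂ := add_le_add (hνabs n x) hx
          _ = 2 * C₂ := by ring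
      · filter_upwards [hνae] with x hx
        have := (((hx.sub (tendsto_const_nhds (x := νlim x))).pow 2)).mul_const (‖Dlim x‖ ^ 2)
        simpa using this
    simpa using h0
  -- Step hp : weak convergence against ν∞ • Dlim
  have hνtop : MemLp νlim ⊤ μ := memLp_top_of_bound hνlimsm C₂
    (by filter_upwards [hνlimbd] with x hx; simpa [Real.norm_eq_abs] using hx)
  have hφ₀ : MemLp (fun x => νlim x • Dlim x) 2 μ := hDlim.smul hνtop
  have hp : Tendsto (fun n => ∫ x, νlim x * (inner ℝ (D n x) (Dlim x) : ℝ) ∂μ) atTop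
      (nhds L) := by
    have := hweak _ hφ₀
    simp_rw [real_inner_smul_right, real_inner_self_eq_norm_sq] at this
    exact this
  -- Step hq : the perturbation term goes to 0
  have hq : Tendsto (fun n => ∫ x, (ν n x - νlim x) * (inner ℝ (D n x) (Dlim x) : ℝ) ∂μ) atTop
      (nhds 0) := by
    set v : ℕ → Q → ℝ := fun n x => |ν n x - νlim x| * ‖Dlim x‖ with hv
    have hvmem : ∀ n, MemLp (v n) 2 μ := by
      intro n
      refine MemLp.of_le_mul (c := 2 * C₂) hDlim.norm
        ((habsm n).mul hDlim.1.norm) ?_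
      filter_upwards [hνlimbd] with x hx
      rw [hv, Real.norm_eq_abs, Real.norm_eq_abs, abs_mul, abs_abs, abs_norm]
      refine mul_le_mul_of_nonneg_right ?_ (norm_nonneg _)
      calc |ν n x - νlim x| ≤ |ν n x| + |νlim x| := abs_sub _ _
        _ ≤ C₂ + C₂ := add_le_add (hνabs n x) hx
        _ = 2 * C₂ := by ring
    have intq : ∀ n, Integrable
        (fun x => (ν n x - νlim x) * (inner ℝ (D n x) (Dlim x) : ℝ)) μ := fun n => by
      have := (intb n).sub (intp n)
      refine this.congr (Eventually.of_forall fun x => ?_)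
      simp only [Pi.sub_apply]
      ring
    have hbound : ∀ n, |∫ x, (ν n x - νlim x) * (inner ℝ (D n x) (Dlim x) : ℝ) ∂μ| ≤
        Real.sqrt M * Real.sqrt (∫ x, (ν n x - νlim x) ^ 2 * ‖Dlim x‖ ^ 2 ∂μ) := by
      intro n
      have h1 : |∫ x, (ν n x - νlim x) * (inner ℝ (D n x) (Dlim x) : ℝ) ∂μ| ≤
          ∫ x, ‖D n x‖ * v n x ∂μ := by
        have habs := norm_integral_le_integral_norm
          (μ := μ) (fun x => (ν n x - νlim x) * (inner ℝ (D n x) (Dlim x) : ℝ))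
        rw [Real.norm_eq_abs] at habs
        refine habs.trans ?_
        simp_rw [Real.norm_eq_abs]
        refine integral_mono (intq n).abs (my_mulint (hD n).norm (hvmem n)) fun x => ?_
        rw [abs_mul, hv]
        calc |ν n x - νlim x| * |(inner ℝ (D n x) (Dlim x) : ℝ)|
            ≤ |ν n x - νlim x| * (‖D n x‖ * ‖Dlim x‖) :=
              mul_le_mul_of_nonneg_left (abs_real_inner_le_norm _ _) (abs_nonneg _)
          _ = ‖D n x‖ * (|ν n x - νlim x| * ‖Dlim x‖) := by ring
      have h2 : ∫ x, ‖D n x‖ * v n x ∂μ ≤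
          Real.sqrt (∫ x, ‖D n x‖ ^ 2 ∂μ) * Real.sqrt (∫ x, (v n x) ^ 2 ∂μ) :=
        my_cs _ _ (fun x => norm_nonneg _)
          (fun x => mul_nonneg (abs_nonneg _) (norm_nonneg _)) (hD n).norm (hvmem n)
      have h3 : ∫ x, (v n x) ^ 2 ∂μ = ∫ x, (ν n x - νlim x) ^ 2 * ‖Dlim x‖ ^ 2 ∂μ := by
        refine integral_congr_ae (Eventually.of_forall fun x => ?_)
        rw [hv]; simp [mul_pow, sq_abs]
      have h4 : Real.sqrt (∫ x, ‖D n x‖ ^ 2 ∂μ) ≤ Real.sqrt M := Real.sqrt_le_sqrt (hM n)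
      calc |∫ x, (ν n x - νlim x) * (inner ℝ (D n x) (Dlim x) : ℝ) ∂μ|
          ≤ ∫ x, ‖D n x‖ * v n x ∂μ := h1
        _ ≤ Real.sqrt (∫ x, ‖D n x‖ ^ 2 ∂μ) * Real.sqrt (∫ x, (v n x) ^ 2 ∂μ) := h2
        _ ≤ Real.sqrt M * Real.sqrt (∫ x, (ν n x - νlim x) ^ 2 * ‖Dlim x‖ ^ 2 ∂μ) := by
            rw [← h3]
            exact mul_le_mul_of_nonneg_right h4 (Real.sqrt_nonneg _)
    have hg0 : Tendsto (fun n =>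
        Real.sqrt M * Real.sqrt (∫ x, (ν n x - νlim x) ^ 2 * ‖Dlim x‖ ^ 2 ∂μ)) atTop
        (nhds 0) := by
      have := (hs.sqrt).const_mul (Real.sqrt M)
      simpa using this
    exact squeeze_zero_norm (fun n => by rw [Real.norm_eq_abs]; exact hbound n) hg0
  -- Step hb : ∫ νₙ ⟨Dₙ, Dlim⟩ → L
  have hb : Tendsto (fun n => ∫ x, ν n x * (inner ℝ (D n x) (Dlim x) : ℝ) ∂μ) atTop
      (nhds L) := by
    have hsplit : ∀ n, ∫ x, ν n x * (inner ℝ (D n x) (Dlim x) : ℝ) ∂μ =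
        (∫ x, νlim x * (inner ℝ (D n x) (Dlim x) : ℝ) ∂μ) +
        ∫ x, (ν n x - νlim x) * (inner ℝ (D n x) (Dlim x) : ℝ) ∂μ := by
      intro n
      rw [← integral_add (intp n) (by
        have := (intb n).sub (intp n)
        refine this.congr (Eventually.of_forall fun x => ?_)
        simp only [Pi.sub_apply]; ring)]
      refine integral_congr_ae (Eventually.of_forall fun x => ?_)
      ring
    have := hp.add hq
    rw [add_zero] at this
    exact this.congr (fun n => (hsplit n).symm)
  -- Step ha : ∫ νₙ ‖Dₙ‖² → L
  have hexp : ∀ n, ∫ x, ν n x * ‖D n x - Dlim x‖ ^ 2 ∂μ =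
      (∫ x, ν n x * ‖D n x‖ ^ 2 ∂μ) -
      2 * (∫ x, ν n x * (inner ℝ (D n x) (Dlim x) : ℝ) ∂μ) +
      ∫ x, ν n x * ‖Dlim x‖ ^ 2 ∂μ := by
    intro n
    have hpt : ∀ x, ν n x * ‖D n x - Dlim x‖ ^ 2 =
        (ν n x * ‖D n x‖ ^ 2 - 2 * (ν n x * (inner ℝ (D n x) (Dlim x) : ℝ))) +
        ν n x * ‖Dlim x‖ ^ 2 := by
      intro x
      rw [norm_sub_sq_real]
      ring
    have i2 : Integrable (fun x => 2 * (ν n x * (inner ℝ (D n x) (Dlim x) : ℝ))) μ :=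
      (intb n).const_mul 2
    have i1 : Integrable
        (fun x => ν n x * ‖D n x‖ ^ 2 - 2 * (ν n x * (inner ℝ (D n x) (Dlim x) : ℝ))) μ :=
      (inta n).sub i2
    rw [integral_congr_ae (Eventually.of_forall hpt), integral_add i1 (intc n),
      integral_sub (inta n) i2, integral_const_mul]
  have hnn : ∀ n, 0 ≤ ∫ x, ν n x * ‖D n x - Dlim x‖ ^ 2 ∂μ := fun n =>
    integral_nonneg fun x => mul_nonneg (hν0 n x) (sq_nonneg _)
  have haub : ∀ n, ∫ x, ν n x * ‖D n x‖ ^ 2 ∂μ ≤ C₂ * M := by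
    intro n
    calc ∫ x, ν n x * ‖D n x‖ ^ 2 ∂μ ≤ ∫ x, C₂ * ‖D n x‖ ^ 2 ∂μ :=
          integral_mono (inta n) ((intDn2 n).const_mul C₂) fun x =>
            mul_le_mul_of_nonneg_right (hνbound n x).2 (sq_nonneg _)
      _ = C₂ * ∫ x, ‖D n x‖ ^ 2 ∂μ := integral_const_mul _ _
      _ ≤ C₂ * M := mul_le_mul_of_nonneg_left (hM n) hC₂0
  have halb : ∀ n, 2 * (∫ x, ν n x * (inner ℝ (D n x) (Dlim x) : ℝ) ∂μ) -
      (∫ x, ν n x * ‖Dlim x‖ ^ 2 ∂μ) ≤ ∫ x, ν n x * ‖D n x‖ ^ 2 ∂μ := by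
    intro n
    have := hnn n
    rw [hexp n] at this
    linarith
  have hlow : Tendsto (fun n => 2 * (∫ x, ν n x * (inner ℝ (D n x) (Dlim x) : ℝ) ∂μ) -
      (∫ x, ν n x * ‖Dlim x‖ ^ 2 ∂μ)) atTop (nhds L) := by
    have := (hb.const_mul 2).sub hc
    convert this using 2
    ring
  have hbddle : IsBoundedUnder (· ≤ ·) atTop (fun n => ∫ x, ν n x * ‖D n x‖ ^ 2 ∂μ) :=
    isBoundedUnder_of ⟨C₂ * M, haub⟩
  have hbddge : IsBoundedUnder (· ≥ ·) atTop (fun n => ∫ x, ν n x * ‖D n x‖ ^ 2 ∂μ) :=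
    isBoundedUnder_of ⟨0, fun n => integral_nonneg fun x => mul_nonneg (hν0 n x) (sq_nonneg _)⟩
  have hinf : L ≤ liminf (fun n => ∫ x, ν n x * ‖D n x‖ ^ 2 ∂μ) atTop := by
    rw [← hlow.liminf_eq]
    exact liminf_le_liminf (Eventually.of_forall halb)
      hlow.isBoundedUnder_ge hbddle.isCoboundedUnder_ge
  have ha : Tendsto (fun n => ∫ x, ν n x * ‖D n x‖ ^ 2 ∂μ) atTop (nhds L) :=
    tendsto_of_le_liminf_of_limsup_le hinf hlimsup hbddle hbddge
  -- conclusion, part 1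
  have ht : Tendsto (fun n => (∫ x, ν n x * ‖D n x‖ ^ 2 ∂μ) -
      2 * (∫ x, ν n x * (inner ℝ (D n x) (Dlim x) : ℝ) ∂μ) +
      ∫ x, ν n x * ‖Dlim x‖ ^ 2 ∂μ) atTop (nhds 0) := by
    have := (ha.sub (hb.const_mul 2)).add hc
    convert this using 2
    ring
  have hx1 : ∀ n, ∫ x, ‖D n x - Dlim x‖ ^ 2 ∂μ ≤
      ((∫ x, ν n x * ‖D n x‖ ^ 2 ∂μ) -
        2 * (∫ x, ν n x * (inner ℝ (D n x) (Dlim x) : ℝ) ∂μ) +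
        ∫ x, ν n x * ‖Dlim x‖ ^ 2 ∂μ) / C₁ := by
    intro n
    rw [le_div_iff₀ hC₁, ← hexp n]
    calc (∫ x, ‖D n x - Dlim x‖ ^ 2 ∂μ) * C₁ = ∫ x, C₁ * ‖D n x - Dlim x‖ ^ 2 ∂μ := by
          rw [mul_comm, ← integral_const_mul]
      _ ≤ ∫ x, ν n x * ‖D n x - Dlim x‖ ^ 2 ∂μ :=
          integral_mono ((intdiff2 n).const_mul C₁) (intνdiff2 n) fun x =>
            mul_le_mul_of_nonneg_right (hνbound n x).1 (sq_nonneg _)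
  have part1 : Tendsto (fun n => ∫ x, ‖D n x - Dlim x‖ ^ 2 ∂μ) atTop (nhds 0) := by
    refine squeeze_zero (fun n => integral_nonneg fun x => sq_nonneg _) hx1 ?_
    have := ht.div_const C₁
    simpa using this
  refine ⟨part1, ?_⟩
  -- conclusion, part 2
  set K : ℝ := ∫ x, ‖Dlim x‖ ^ 2 ∂μ with hK
  have hK0 : 0 ≤ K := integral_nonneg fun x => sq_nonneg _
  have hsum2 : ∀ n, ∫ x, (‖D n x‖ + ‖Dlim x‖) ^ 2 ∂μ ≤ 2 * M + 2 * K := by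
    intro n
    calc ∫ x, (‖D n x‖ + ‖Dlim x‖) ^ 2 ∂μ
        ≤ ∫ x, 2 * ‖D n x‖ ^ 2 + 2 * ‖Dlim x‖ ^ 2 ∂μ := by
          refine integral_mono ((hD n).norm.add hDlim.norm).integrable_sq
            (((intDn2 n).const_mul 2).add (intDl2.const_mul 2)) fun x => ?_
          nlinarith [sq_nonneg (‖D n x‖ - ‖Dlim x‖)]
      _ = 2 * (∫ x, ‖D n x‖ ^ 2 ∂μ) + 2 * K := by
          rw [integral_add ((intDn2 n).const_mul 2) (intDl2.const_mul 2),
            integral_const_mul, integral_const_mul, hK]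
      _ ≤ 2 * M + 2 * K := by
          have := hM n
          linarith
  have hyb : ∀ n, ∫ x, |ν n x * ‖D n x‖ ^ 2 - νlim x * ‖Dlim x‖ ^ 2| ∂μ ≤
      C₂ * (Real.sqrt (∫ x, ‖D n x - Dlim x‖ ^ 2 ∂μ) * Real.sqrt (2 * M + 2 * K)) +
      ∫ x, |ν n x - νlim x| * ‖Dlim x‖ ^ 2 ∂μ := by
    intro n
    have intprod : Integrable (fun x => ‖D n x - Dlim x‖ * (‖D n x‖ + ‖Dlim x‖)) μ :=
      my_mulint ((hD n).sub hDlim).norm ((hD n).norm.add hDlim.norm)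
    have step1 : ∫ x, |ν n x * ‖D n x‖ ^ 2 - νlim x * ‖Dlim x‖ ^ 2| ∂μ ≤
        ∫ x, C₂ * (‖D n x - Dlim x‖ * (‖D n x‖ + ‖Dlim x‖)) +
          |ν n x - νlim x| * ‖Dlim x‖ ^ 2 ∂μ := by
      refine integral_mono_ae ((inta n).sub intL).abs
        ((intprod.const_mul C₂).add (intabs n)) ?_
      filter_upwards [hνlimbd] with x hx
      have key : |‖D n x‖ ^ 2 - ‖Dlim x‖ ^ 2| ≤ ‖D n x - Dlim x‖ * (‖D n x‖ + ‖Dlim x‖) := by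
        have h1 : ‖D n x‖ ^ 2 - ‖Dlim x‖ ^ 2 = (‖D n x‖ - ‖Dlim x‖) * (‖D n x‖ + ‖Dlim x‖) := by
          ring
        rw [h1, abs_mul, abs_of_nonneg (add_nonneg (norm_nonneg _) (norm_nonneg _))]
        exact mul_le_mul_of_nonneg_right (abs_norm_sub_norm_le _ _)
          (add_nonneg (norm_nonneg _) (norm_nonneg _))
      calc |ν n x * ‖D n x‖ ^ 2 - νlim x * ‖Dlim x‖ ^ 2|
          = |ν n x * (‖D n x‖ ^ 2 - ‖Dlim x‖ ^ 2) + (ν n x - νlim x) * ‖Dlim x‖ ^ 2| := by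
            congr 1
            ring
        _ ≤ |ν n x * (‖D n x‖ ^ 2 - ‖Dlim x‖ ^ 2)| + |(ν n x - νlim x) * ‖Dlim x‖ ^ 2| :=
            abs_add_le _ _
        _ ≤ C₂ * (‖D n x - Dlim x‖ * (‖D n x‖ + ‖Dlim x‖)) + |ν n x - νlim x| * ‖Dlim x‖ ^ 2 := by
            rw [abs_mul, abs_mul, abs_of_nonneg (sq_nonneg (‖Dlim x‖))]
            exact add_le_add (mul_le_mul (hνabs n x) key (abs_nonneg _) hC₂0) le_rfl
    have step2 : ∫ x, ‖D n x - Dlim x‖ * (‖D n x‖ + ‖Dlim x‖) ∂μ ≤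
        Real.sqrt (∫ x, ‖D n x - Dlim x‖ ^ 2 ∂μ) * Real.sqrt (2 * M + 2 * K) := by
      have hcs := my_cs (fun x => ‖D n x - Dlim x‖) (fun x => ‖D n x‖ + ‖Dlim x‖)
        (fun x => norm_nonneg _) (fun x => add_nonneg (norm_nonneg _) (norm_nonneg _))
        ((hD n).sub hDlim).norm ((hD n).norm.add hDlim.norm)
      refine hcs.trans ?_
      exact mul_le_mul_of_nonneg_left (Real.sqrt_le_sqrt (hsum2 n)) (Real.sqrt_nonneg _)
    calc ∫ x, |ν n x * ‖D n x‖ ^ 2 - νlim x * ‖Dlim x‖ ^ 2| ∂μ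
        ≤ ∫ x, C₂ * (‖D n x - Dlim x‖ * (‖D n x‖ + ‖Dlim x‖)) +
            |ν n x - νlim x| * ‖Dlim x‖ ^ 2 ∂μ := step1
      _ = C₂ * (∫ x, ‖D n x - Dlim x‖ * (‖D n x‖ + ‖Dlim x‖) ∂μ) +
            ∫ x, |ν n x - νlim x| * ‖Dlim x‖ ^ 2 ∂μ := by
          rw [integral_add (intprod.const_mul C₂) (intabs n), integral_const_mul]
      _ ≤ C₂ * (Real.sqrt (∫ x, ‖D n x - Dlim x‖ ^ 2 ∂μ) * Real.sqrt (2 * M + 2 * K)) +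
            ∫ x, |ν n x - νlim x| * ‖Dlim x‖ ^ 2 ∂μ :=
          add_le_add (mul_le_mul_of_nonneg_left step2 hC₂0) le_rfl
  have hg : Tendsto (fun n =>
      C₂ * (Real.sqrt (∫ x, ‖D n x - Dlim x‖ ^ 2 ∂μ) * Real.sqrt (2 * M + 2 * K)) +
      ∫ x, |ν n x - νlim x| * ‖Dlim x‖ ^ 2 ∂μ) atTop (nhds 0) := by
    have h1 := ((part1.sqrt).mul_const (Real.sqrt (2 * M + 2 * K))).const_mul C₂
    have := h1.add hd
    simpa using this
  exact squeeze_zero (fun n => integral_nonneg fun x => abs_nonneg _) hyb hg
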